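/- For a reproducing kernel Hilbert space H with kernel k and probability measures p, q with Bochner-integrable kernel embeddings, the squared MMD over the unit ball of H satisfies MMD²[p,q] = E_{x,x'~p}[k(x,x')] − 2 E_{x~p, y~q}[k(x,y)] + E_{y,y'~q}[k(y,y')]. -/

import Mathlib

open MeasureTheory

lemma double_inner {Ω : Type*} [MeasurableSpace Ω]
    {H : Type*} [NormedAddCommGroup H] [InnerProductSpace ℝ H] [CompleteSpace H]
    (φ : Ω → H) (p q : Measure Ω)
    (hφp : Integrable φ p) (hφq : Integrable φ q) :
    (∫ x, ∫ y, (inner ℝ (φ x) (φ y) : ℝ) ∂q ∂p)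
      = inner ℝ (∫ x, φ x ∂p) (∫ y, φ y ∂q) := by
  have h1 : ∀ x, (∫ y, (inner ℝ (φ x) (φ y) : ℝ) ∂q) = inner ℝ (φ x) (∫ y, φ y ∂q) := by
    intro x
    exact integral_inner hφq (φ x)
  simp_rw [h1]
  have h2 : (∫ x, (inner ℝ (φ x) (∫ y, φ y ∂q) : ℝ) ∂p)
      = inner ℝ (∫ y, φ y ∂q) (∫ x, φ x ∂p) := by
    have : ∀ x, (inner ℝ (φ x) (∫ y, φ y ∂q) : ℝ) = inner ℝ (∫ y, φ y ∂q) (φ x) :=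
      fun x => real_inner_comm _ _
    simp_rw [this]
    exact integral_inner hφp _
  rw [h2, real_inner_comm]

/-- For an RKHS `H` with feature map `φ` and kernel `k x y = ⟪φ x, φ y⟫`, and probability
measures `p, q` with Bochner-integrable kernel embeddings, the squared MMD over the unit ball
of `H` (which equals the squared norm of the difference of mean embeddings) satisfies
`MMD² = E_{x,x'~p}[k(x,x')] - 2 E_{x~p,y~q}[k(x,y)] + E_{y,y'~q}[k(y,y')]`. -/
theorem stmt_2 {Ω : Type*} [MeasurableSpace Ω]
    {H : Type*} [NormedAddCommGroup H] [InnerProductSpace ℝ H] [CompleteSpace H]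
    (φ : Ω → H) (k : Ω → Ω → ℝ)
    (hk : ∀ x y, k x y = inner ℝ (φ x) (φ y))
    (p q : Measure Ω) [IsProbabilityMeasure p] [IsProbabilityMeasure q]
    (hφp : Integrable φ p) (hφq : Integrable φ q) :
    ‖(∫ x, φ x ∂p) - ∫ y, φ y ∂q‖ ^ 2
      = (∫ x, ∫ x', k x x' ∂p ∂p) - 2 * (∫ x, ∫ y, k x y ∂q ∂p)
        + ∫ y, ∫ y', k y y' ∂q ∂q := by
  simp_rw [hk]
  rw [double_inner φ p p hφp hφp, double_inner φ p q hφp hφq,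
    double_inner φ q q hφq hφq, @norm_sub_sq_real H]
  ring_nf
  rw [real_inner_self_eq_norm_sq, real_inner_self_eq_norm_sq]
  ring
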